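/- Let μ be a finite signed Borel measure on ℝ with μ(ℝ) = 0 and ∫ y² |μ|(dy) < ∞, and set M = |μ|(ℝ). Then for every ε > 0 and every continuously differentiable 2π-periodic function u : ℝ → ℝ, the approximate derivative D_ε u satisfies ‖D_ε u‖_{L²([0,2π])} ≤ ( M ∫_ℝ y² |μ|(dy) )^{1/2} ‖u'‖_{L²([0,2π])}; in particular this bound is uniform in ε. -/

import Mathlib

open MeasureTheory Real

lemma cs_aux {α : Type*} [MeasurableSpace α] (m : Measure α) [IsFiniteMeasure m]
    {f : α → ℝ} (hfm : AEStronglyMeasurable f m)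
    (hf2 : Integrable (fun a => f a ^ 2) m) :
    (∫ a, |f a| ∂m) ^ 2 ≤ (m Set.univ).toReal * ∫ a, f a ^ 2 ∂m := by
  have hmem : MemLp f 2 m := (memLp_two_iff_integrable_sq hfm).2 hf2
  have hpq : Real.HolderConjugate 2 2 := ⟨by norm_num, by norm_num, by norm_num⟩
  have h1 : MemLp (fun _ : α => (1 : ℝ)) (ENNReal.ofReal 2) m := memLp_const 1
  have habs : MemLp (fun a => |f a|) (ENNReal.ofReal 2) m := by
    rw [ENNReal.ofReal_ofNat]; exact hmem.abs
  have key := integral_mul_le_Lp_mul_Lq_of_nonneg hpq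
    (f := fun a => |f a|) (g := fun _ => (1:ℝ))
    (Filter.Eventually.of_forall fun a => abs_nonneg _)
    (Filter.Eventually.of_forall fun a => zero_le_one) habs h1
  simp only [mul_one] at key
  have h2 : ∀ x : ℝ, x ^ (2:ℝ) = x ^ 2 := fun x => by
    rw [show (2:ℝ) = ((2:ℕ):ℝ) by norm_num, Real.rpow_natCast]
  have hA : (0:ℝ) ≤ ∫ a, f a ^ 2 ∂m := integral_nonneg fun a => sq_nonneg _
  have keq : ∫ a, |f a| ^ (2:ℝ) ∂m = ∫ a, f a ^ 2 ∂m := by simp [h2, sq_abs]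
  have k1 : ∫ a, (1:ℝ) ^ (2:ℝ) ∂m = (m Set.univ).toReal := by simp [measureReal_def]
  rw [keq, k1] at key
  have key2 : ∫ a, |f a| ∂m ≤ Real.sqrt (∫ a, f a ^ 2 ∂m) * Real.sqrt ((m Set.univ).toReal) := by
    rw [Real.sqrt_eq_rpow, Real.sqrt_eq_rpow]; exact key
  calc (∫ a, |f a| ∂m) ^ 2
      ≤ (Real.sqrt (∫ a, f a ^ 2 ∂m) * Real.sqrt ((m Set.univ).toReal)) ^ 2 :=
        pow_le_pow_left₀ (integral_nonneg fun a => abs_nonneg _) key2 2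
    _ = (m Set.univ).toReal * ∫ a, f a ^ 2 ∂m := by
        rw [mul_pow, Real.sq_sqrt hA, Real.sq_sqrt ENNReal.toReal_nonneg, mul_comm]

lemma bdd_of_periodic {f : ℝ → ℝ} {T : ℝ} (hf : Continuous f)
    (hp : Function.Periodic f T) (hT : 0 < T) : ∃ C : ℝ, 0 ≤ C ∧ ∀ x, |f x| ≤ C := by
  obtain ⟨C, hC⟩ := (isCompact_Icc (a := (0:ℝ)) (b := T)).exists_bound_of_continuousOn
    hf.continuousOn
  refine ⟨max C 0, le_max_right _ _, fun x => ?_⟩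
  obtain ⟨y, hy, hxy⟩ := hp.exists_mem_Ico₀ hT x
  rw [hxy]
  exact le_trans (hC y (Set.mem_Icc_of_Ico hy)) (le_max_left _ _)

lemma periodic_deriv' {f : ℝ → ℝ} {T : ℝ} (hp : Function.Periodic f T) :
    Function.Periodic (deriv f) T := by
  intro x
  have : (fun t => f (t + T)) = f := funext fun t => hp t
  calc deriv f (x + T) = deriv (fun t => f (t + T)) x := by rw [deriv_comp_add_const]
    _ = deriv f x := by rw [this]

lemma integrable_of_bdd {α : Type*} [MeasurableSpace α] {m : Measure α} [IsFiniteMeasure m]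
    {f : α → ℝ} (hfm : AEStronglyMeasurable f m) {C : ℝ} (h : ∀ a, |f a| ≤ C) :
    Integrable f m :=
  ⟨hfm, HasFiniteIntegral.of_bounded (C := C) (Filter.Eventually.of_forall fun a => by
    simpa using h a)⟩

lemma lemA {u : ℝ → ℝ} (hu : ContDiff ℝ 1 u) (hper : Function.Periodic u (2 * π)) (h : ℝ) :
    ∫ x in (0:ℝ)..(2*π), (u (x+h) - u x)^2 ≤
      h^2 * ∫ x in (0:ℝ)..(2*π), (deriv u x)^2 := by
  rcases eq_or_ne h 0 with rfl | hne
  · simp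
  have hv : Continuous (deriv u) := hu.continuous_deriv le_rfl
  have hvper : Function.Periodic (deriv u) (2*π) := periodic_deriv' hper
  obtain ⟨Cv, hCv0, hCv⟩ := bdd_of_periodic hv hvper (by positivity)
  have hv2per : Function.Periodic (fun t => (deriv u t)^2) (2*π) := fun t => by
    simp [hvper t]
  set m1 : Measure ℝ := volume.restrict (Set.Ioc (0:ℝ) 1) with hm1
  set m2 : Measure ℝ := volume.restrict (Set.Ioc (0:ℝ) (2*π)) with hm2
  have hm1univ : (m1 Set.univ).toReal = 1 := by
    simp [hm1, Measure.restrict_apply, Real.volume_Ioc]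
  -- FTC representation
  have key : ∀ x : ℝ, u (x+h) - u x = h * ∫ s in (0:ℝ)..1, deriv u (h*s + x) := by
    intro x
    have ftc : ∫ t in x..(x+h), deriv u t = u (x+h) - u x :=
      intervalIntegral.integral_deriv_eq_sub
        (fun t _ => (hu.differentiable one_ne_zero).differentiableAt)
        (hv.intervalIntegrable _ _)
    have sub := intervalIntegral.integral_comp_mul_add (a := (0:ℝ)) (b := 1)
      (deriv u) hne x
    rw [sub]
    simp only [mul_zero, mul_one, zero_add, smul_eq_mul, add_comm h x]
    rw [ftc, ← mul_assoc, mul_inv_cancel₀ hne, one_mul]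
  -- pointwise Cauchy-Schwarz in s
  have ptwise : ∀ x : ℝ, (u (x+h) - u x)^2 ≤ h^2 * ∫ s, (deriv u (h*s + x))^2 ∂m1 := by
    intro x
    have hwm : AEStronglyMeasurable (fun s => deriv u (h*s + x)) m1 :=
      ((hv.comp (by continuity)).aestronglyMeasurable)
    have hw2 : Integrable (fun s => (deriv u (h*s + x))^2) m1 :=
      integrable_of_bdd ((hv.comp (by continuity)).pow 2).aestronglyMeasurable
        (C := Cv^2) (fun s => by
          rw [abs_pow]
          exact pow_le_pow_left₀ (abs_nonneg _) (hCv _) 2)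
    have hw1 : Integrable (fun s => deriv u (h*s + x)) m1 :=
      integrable_of_bdd hwm (C := Cv) (fun s => hCv _)
    have cs := cs_aux m1 hwm hw2
    rw [hm1univ, one_mul] at cs
    have habs : |∫ s, deriv u (h*s+x) ∂m1| ≤ ∫ s, |deriv u (h*s+x)| ∂m1 := by
      simpa [Real.norm_eq_abs] using
        norm_integral_le_integral_norm (μ := m1) (fun s => deriv u (h*s+x))
    have h1 : (∫ s, deriv u (h*s+x) ∂m1)^2 ≤ ∫ s, (deriv u (h*s+x))^2 ∂m1 := by
      calc (∫ s, deriv u (h*s+x) ∂m1)^2 = |∫ s, deriv u (h*s+x) ∂m1|^2 := (sq_abs _).symm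
        _ ≤ (∫ s, |deriv u (h*s+x)| ∂m1)^2 :=
            pow_le_pow_left₀ (abs_nonneg _) habs 2
        _ ≤ ∫ s, (deriv u (h*s+x))^2 ∂m1 := cs
    have : (u (x+h) - u x)^2 = h^2 * (∫ s, deriv u (h*s+x) ∂m1)^2 := by
      rw [key x, mul_pow]
      congr 1
      rw [intervalIntegral.integral_of_le zero_le_one]
    rw [this]
    exact mul_le_mul_of_nonneg_left h1 (sq_nonneg _)
  -- Fubini setup
  have hFcont : Continuous (fun p : ℝ × ℝ => (deriv u (h * p.2 + p.1))^2) := by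
    apply Continuous.pow
    exact hv.comp (by continuity)
  have hFint : Integrable (fun p : ℝ × ℝ => (deriv u (h * p.2 + p.1))^2) (m2.prod m1) :=
    integrable_of_bdd hFcont.aestronglyMeasurable (C := Cv^2) (fun p => by
      rw [abs_pow]; exact pow_le_pow_left₀ (abs_nonneg _) (hCv _) 2)
  have hmarg : Integrable (fun x => ∫ s, (deriv u (h*s + x))^2 ∂m1) m2 := by
    have := hFint.integral_prod_left
    simpa using this
  have hΔint : Integrable (fun x => (u (x+h) - u x)^2) m2 := by
    obtain ⟨Cu, hCu0, hCu⟩ := bdd_of_periodic hu.continuous hper (by positivity)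
    exact integrable_of_bdd
      (((hu.continuous.comp (continuous_id.add continuous_const)).sub
        hu.continuous).pow 2).aestronglyMeasurable (C := (2*Cu)^2) (fun x => by
      rw [abs_pow]
      apply pow_le_pow_left₀ (abs_nonneg _) _ 2
      calc |u (x+h) - u x| ≤ |u (x+h)| + |u x| := abs_sub _ _
        _ ≤ Cu + Cu := add_le_add (hCu _) (hCu _)
        _ = 2 * Cu := by ring)
  -- swap and shift
  have hinner : ∀ s : ℝ, ∫ x, (deriv u (h*s + x))^2 ∂m2 = ∫ x in (0:ℝ)..(2*π), (deriv u x)^2 := by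
    intro s
    have e1 : ∫ x, (deriv u (h*s + x))^2 ∂m2
        = ∫ x in (0:ℝ)..(2*π), (deriv u (h*s + x))^2 := by
      rw [intervalIntegral.integral_of_le (by positivity)]
    rw [e1, intervalIntegral.integral_comp_add_left (fun t => (deriv u t)^2) (h*s)]
    have := hv2per.intervalIntegral_add_eq (h*s) 0
    simpa using this
  have hswap : ∫ x, (∫ s, (deriv u (h*s + x))^2 ∂m1) ∂m2
      = ∫ x in (0:ℝ)..(2*π), (deriv u x)^2 := by
    rw [integral_integral_swap (f := fun x s => (deriv u (h*s + x))^2) hFint]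
    rw [integral_congr_ae (Filter.Eventually.of_forall fun s => hinner s)]
    simp [integral_const, measureReal_def, hm1univ]
  -- conclude
  rw [intervalIntegral.integral_of_le (le_of_lt (by positivity : (0:ℝ) < 2*π))]
  calc ∫ x, (u (x+h) - u x)^2 ∂m2
      ≤ ∫ x, h^2 * ∫ s, (deriv u (h*s + x))^2 ∂m1 ∂m2 :=
        integral_mono hΔint (hmarg.const_mul _) (fun x => ptwise x)
    _ = h^2 * ∫ x, (∫ s, (deriv u (h*s + x))^2 ∂m1) ∂m2 := integral_const_mul _ _
    _ = h^2 * ∫ x in (0:ℝ)..(2*π), (deriv u x)^2 := by rw [hswap]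

/-- `L²` bound for the approximate derivative, uniform in `ε`:
`‖D_ε u‖_{L²([0,2π])} ≤ (M ∫ y² |μ|(dy))^{1/2} ‖u'‖_{L²([0,2π])}`, where `μ = μp - μn`
is a finite signed measure with `μ(ℝ) = 0`, `M = |μ|(ℝ)` and
`(D_ε u)(x) = ε⁻¹ ∫ u(x+εy) μ(dy)`. -/
theorem stmt_12 (μp μn : Measure ℝ) [IsFiniteMeasure μp] [IsFiniteMeasure μn]
    (hzero : μp Set.univ = μn Set.univ)
    (hmom : Integrable (fun y : ℝ => y ^ 2) (μp + μn))
    (ε : ℝ) (hε : 0 < ε)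
    (u : ℝ → ℝ) (hu : ContDiff ℝ 1 u) (hper : Function.Periodic u (2 * π)) :
    Real.sqrt (∫ x in (0 : ℝ)..(2 * π),
        (ε⁻¹ * ((∫ y, u (x + ε * y) ∂μp) - ∫ y, u (x + ε * y) ∂μn)) ^ 2) ≤
      Real.sqrt (((μp + μn) Set.univ).toReal * ∫ y, y ^ 2 ∂(μp + μn)) *
        Real.sqrt (∫ x in (0 : ℝ)..(2 * π), deriv u x ^ 2) := by
  have hπ : (0:ℝ) < 2 * π := by positivity
  set ν : Measure ℝ := μp + μn with hν
  set C : ℝ := ∫ x in (0:ℝ)..(2*π), deriv u x ^ 2 with hCdef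
  have hC0 : 0 ≤ C := intervalIntegral.integral_nonneg hπ.le (fun x _ => sq_nonneg _)
  set M : ℝ := (ν Set.univ).toReal with hMdef
  set I2 : ℝ := ∫ y, y ^ 2 ∂ν with hI2def
  have hM0 : 0 ≤ M := ENNReal.toReal_nonneg
  have hI20 : 0 ≤ I2 := integral_nonneg fun y => sq_nonneg _
  obtain ⟨Cu, hCu0, hCu⟩ := bdd_of_periodic hu.continuous hper hπ
  -- continuity facts
  have hcont2 : Continuous fun p : ℝ × ℝ => u (p.1 + ε * p.2) :=
    hu.continuous.comp (by continuity)
  have hcontx : ∀ x : ℝ, Continuous fun y : ℝ => u (x + ε * y) := fun x =>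
    hu.continuous.comp (by continuity)
  -- integrability of the shifted function over the measures
  have hip : ∀ (x : ℝ) (m : Measure ℝ) [IsFiniteMeasure m],
      Integrable (fun y => u (x + ε * y)) m := fun x m _ =>
    integrable_of_bdd (hcontx x).aestronglyMeasurable (C := Cu) fun y => hCu _
  -- the difference kernel
  set Δ : ℝ → ℝ → ℝ := fun x y => u (x + ε * y) - u x with hΔdef
  have hΔbdd : ∀ x y, |Δ x y| ≤ 2 * Cu := fun x y => by
    calc |Δ x y| ≤ |u (x + ε * y)| + |u x| := abs_sub _ _
      _ ≤ Cu + Cu := add_le_add (hCu _) (hCu _)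
      _ = 2 * Cu := by ring
  have hΔcontx : ∀ x : ℝ, Continuous (Δ x) := fun x => (hcontx x).sub continuous_const
  have hΔint : ∀ (x : ℝ) (m : Measure ℝ) [IsFiniteMeasure m], Integrable (Δ x) m :=
    fun x m _ => integrable_of_bdd (hΔcontx x).aestronglyMeasurable
      (C := 2*Cu) (hΔbdd x)
  -- rewrite D using the cancellation
  have hDrw : ∀ x : ℝ,
      (∫ y, u (x + ε * y) ∂μp) - ∫ y, u (x + ε * y) ∂μn
        = (∫ y, Δ x y ∂μp) - ∫ y, Δ x y ∂μn := by
    intro x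
    have e1 : ∫ y, Δ x y ∂μp = (∫ y, u (x + ε * y) ∂μp) - (μp Set.univ).toReal * u x := by
      rw [integral_sub (hip x μp) (integrable_const _), integral_const, smul_eq_mul, measureReal_def]
    have e2 : ∫ y, Δ x y ∂μn = (∫ y, u (x + ε * y) ∂μn) - (μn Set.univ).toReal * u x := by
      rw [integral_sub (hip x μn) (integrable_const _), integral_const, smul_eq_mul, measureReal_def]
    rw [e1, e2, hzero]; ring
  -- pointwise Cauchy-Schwarz in y
  have ptwise : ∀ x : ℝ,
      (ε⁻¹ * ((∫ y, u (x + ε * y) ∂μp) - ∫ y, u (x + ε * y) ∂μn)) ^ 2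
        ≤ ε⁻¹ ^ 2 * (M * ∫ y, Δ x y ^ 2 ∂ν) := by
    intro x
    have habsν : ∫ y, |Δ x y| ∂ν = (∫ y, |Δ x y| ∂μp) + ∫ y, |Δ x y| ∂μn :=
      integral_add_measure (hΔint x μp).abs (hΔint x μn).abs
    have hdiff : |(∫ y, Δ x y ∂μp) - ∫ y, Δ x y ∂μn| ≤ ∫ y, |Δ x y| ∂ν := by
      rw [habsν]
      have h1 : |∫ y, Δ x y ∂μp| ≤ ∫ y, |Δ x y| ∂μp := by
        simpa [Real.norm_eq_abs] using norm_integral_le_integral_norm (μ := μp) (Δ x)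
      have h2 : |∫ y, Δ x y ∂μn| ≤ ∫ y, |Δ x y| ∂μn := by
        simpa [Real.norm_eq_abs] using norm_integral_le_integral_norm (μ := μn) (Δ x)
      calc |(∫ y, Δ x y ∂μp) - ∫ y, Δ x y ∂μn|
          ≤ |∫ y, Δ x y ∂μp| + |∫ y, Δ x y ∂μn| := abs_sub _ _
        _ ≤ _ := add_le_add h1 h2
    have hΔ2int : Integrable (fun y => Δ x y ^ 2) ν :=
      integrable_of_bdd ((hΔcontx x).pow 2).aestronglyMeasurable (C := (2*Cu)^2)
        (fun y => by rw [abs_pow]; exact pow_le_pow_left₀ (abs_nonneg _) (hΔbdd x y) 2)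
    have cs := cs_aux ν (hΔcontx x).aestronglyMeasurable hΔ2int
    rw [hDrw x, mul_pow]
    apply mul_le_mul_of_nonneg_left _ (sq_nonneg ε⁻¹)
    calc ((∫ y, Δ x y ∂μp) - ∫ y, Δ x y ∂μn) ^ 2
        = |(∫ y, Δ x y ∂μp) - ∫ y, Δ x y ∂μn| ^ 2 := (sq_abs _).symm
      _ ≤ (∫ y, |Δ x y| ∂ν) ^ 2 := pow_le_pow_left₀ (abs_nonneg _) hdiff 2
      _ ≤ M * ∫ y, Δ x y ^ 2 ∂ν := cs
  -- Fubini setup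
  set m2 : Measure ℝ := volume.restrict (Set.Ioc (0:ℝ) (2*π)) with hm2
  have hFint : Integrable (fun p : ℝ × ℝ => Δ p.1 p.2 ^ 2) (m2.prod ν) :=
    integrable_of_bdd
      (((hcont2.sub (hu.continuous.comp continuous_fst)).pow 2).aestronglyMeasurable)
      (C := (2*Cu)^2)
      (fun p => by rw [abs_pow]; exact pow_le_pow_left₀ (abs_nonneg _) (hΔbdd p.1 p.2) 2)
  have hG : Integrable (fun x => ∫ y, Δ x y ^ 2 ∂ν) m2 := hFint.integral_prod_left
  -- measurability and integrability of D²
  have hDA : StronglyMeasurable fun x : ℝ => ∫ y, u (x + ε * y) ∂μp :=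
    (hcont2.stronglyMeasurable).integral_prod_right'
  have hDB : StronglyMeasurable fun x : ℝ => ∫ y, u (x + ε * y) ∂μn :=
    (hcont2.stronglyMeasurable).integral_prod_right'
  have hDbdd : ∀ x : ℝ,
      |(ε⁻¹ * ((∫ y, u (x + ε * y) ∂μp) - ∫ y, u (x + ε * y) ∂μn)) ^ 2|
        ≤ (ε⁻¹ * (Cu * (μp Set.univ).toReal + Cu * (μn Set.univ).toReal)) ^ 2 := by
    intro x
    rw [abs_pow]
    apply pow_le_pow_left₀ (abs_nonneg _) _ 2
    rw [abs_mul, abs_of_nonneg (inv_nonneg.2 hε.le)]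
    apply mul_le_mul_of_nonneg_left _ (inv_nonneg.2 hε.le)
    have h1 : ‖∫ y, u (x + ε * y) ∂μp‖ ≤ Cu * (μp Set.univ).toReal :=
      norm_integral_le_of_norm_le_const (Filter.Eventually.of_forall fun y => by
        simpa using hCu (x + ε * y))
    have h2 : ‖∫ y, u (x + ε * y) ∂μn‖ ≤ Cu * (μn Set.univ).toReal :=
      norm_integral_le_of_norm_le_const (Filter.Eventually.of_forall fun y => by
        simpa using hCu (x + ε * y))
    calc |(∫ y, u (x + ε * y) ∂μp) - ∫ y, u (x + ε * y) ∂μn|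
        ≤ |∫ y, u (x + ε * y) ∂μp| + |∫ y, u (x + ε * y) ∂μn| := abs_sub _ _
      _ ≤ _ := add_le_add h1 h2
  have hDmeas : AEStronglyMeasurable
      (fun x => (ε⁻¹ * ((∫ y, u (x + ε * y) ∂μp) - ∫ y, u (x + ε * y) ∂μn)) ^ 2) m2 := by
    have h0 : StronglyMeasurable
        (fun x => ε⁻¹ * ((∫ y, u (x + ε * y) ∂μp) - ∫ y, u (x + ε * y) ∂μn)) :=
      (stronglyMeasurable_const.mul (hDA.sub hDB))
    exact (h0.mul h0).aestronglyMeasurable.congr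
      (Filter.Eventually.of_forall fun x => by rw [Pi.mul_apply]; ring)
  have hDint : Integrable
      (fun x => (ε⁻¹ * ((∫ y, u (x + ε * y) ∂μp) - ∫ y, u (x + ε * y) ∂μn)) ^ 2) m2 :=
    integrable_of_bdd hDmeas (fun x => hDbdd x)
  -- main chain
  have hinner : ∀ y : ℝ, ∫ x, Δ x y ^ 2 ∂m2 ≤ (ε * y) ^ 2 * C := by
    intro y
    have := lemA hu hper (ε * y)
    rw [intervalIntegral.integral_of_le hπ.le] at this
    exact this
  have hmarg2 : Integrable (fun y => ∫ x, Δ x y ^ 2 ∂m2) ν := hFint.integral_prod_right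
  have hrhsint : Integrable (fun y : ℝ => (ε * y) ^ 2 * C) ν := by
    have : (fun y : ℝ => (ε * y) ^ 2 * C) = fun y : ℝ => (ε ^ 2 * C) * y ^ 2 := by
      funext y; ring
    rw [this]
    exact hmom.const_mul _
  have key : ∫ x, (ε⁻¹ * ((∫ y, u (x + ε * y) ∂μp) - ∫ y, u (x + ε * y) ∂μn)) ^ 2 ∂m2
      ≤ M * I2 * C := by
    calc ∫ x, (ε⁻¹ * ((∫ y, u (x + ε * y) ∂μp) - ∫ y, u (x + ε * y) ∂μn)) ^ 2 ∂m2
        ≤ ∫ x, ε⁻¹ ^ 2 * (M * ∫ y, Δ x y ^ 2 ∂ν) ∂m2 :=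
          integral_mono hDint (((hG.const_mul M).const_mul _)) ptwise
      _ = ε⁻¹ ^ 2 * M * ∫ x, (∫ y, Δ x y ^ 2 ∂ν) ∂m2 := by
          rw [← integral_const_mul]
          congr 1; funext x; ring
      _ = ε⁻¹ ^ 2 * M * ∫ y, (∫ x, Δ x y ^ 2 ∂m2) ∂ν := by
          rw [integral_integral_swap (f := fun x y => Δ x y ^ 2) hFint]
      _ ≤ ε⁻¹ ^ 2 * M * ∫ y, (ε * y) ^ 2 * C ∂ν := by
          apply mul_le_mul_of_nonneg_left _ (by positivity)
          exact integral_mono hmarg2 hrhsint hinner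
      _ = ε⁻¹ ^ 2 * M * (ε ^ 2 * C * I2) := by
          congr 1
          rw [← integral_const_mul]
          congr 1; funext y; ring
      _ = M * I2 * C := by
          field_simp
  have hgoal : ∫ x in (0:ℝ)..(2*π),
      (ε⁻¹ * ((∫ y, u (x + ε * y) ∂μp) - ∫ y, u (x + ε * y) ∂μn)) ^ 2 ≤ M * I2 * C := by
    rw [intervalIntegral.integral_of_le hπ.le]
    exact key
  calc Real.sqrt (∫ x in (0:ℝ)..(2*π),
        (ε⁻¹ * ((∫ y, u (x + ε * y) ∂μp) - ∫ y, u (x + ε * y) ∂μn)) ^ 2)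
      ≤ Real.sqrt (M * I2 * C) := Real.sqrt_le_sqrt hgoal
    _ = Real.sqrt (M * I2) * Real.sqrt C := Real.sqrt_mul (mul_nonneg hM0 hI20) C
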